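/- For every subset S of the n-th roots of unity, |Σ_{z ∈ S} z| ≤ sin(π·#S/n)/sin(π/n), with equality when S is a set of #S consecutive roots around the circle. (It suffices to prove the inequality for the real part after a rotation.) -/

import Mathlib

open Finset Complex

local notation "π" => Real.pi

lemma abs_exp_I_sub_one (θ : ℝ) :
    ‖Complex.exp ((θ:ℂ) * Complex.I) - 1‖ = 2 * |Real.sin (θ/2)| := by
  have h : Complex.exp ((θ:ℂ) * Complex.I) - 1
      = Complex.exp (((θ/2:ℝ):ℂ) * Complex.I)
        * (Complex.exp (((θ/2:ℝ):ℂ) * Complex.I) - Complex.exp (((-(θ/2):ℝ):ℂ) * Complex.I)) := by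
    rw [mul_sub, ← Complex.exp_add, ← Complex.exp_add]
    have e1 : ((θ/2:ℝ):ℂ) * Complex.I + ((θ/2:ℝ):ℂ) * Complex.I = (θ:ℂ) * Complex.I := by
      push_cast; ring
    have e2 : ((θ/2:ℝ):ℂ) * Complex.I + ((-(θ/2):ℝ):ℂ) * Complex.I = 0 := by
      push_cast; ring
    rw [e1, e2, Complex.exp_zero]
  have h2 : Complex.exp (((θ/2:ℝ):ℂ) * Complex.I) - Complex.exp (((-(θ/2):ℝ):ℂ) * Complex.I)
      = ((2 * Real.sin (θ/2) : ℝ) : ℂ) * Complex.I := by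
    rw [Complex.exp_mul_I, Complex.exp_mul_I]
    push_cast [← Complex.ofReal_sin]
    rw [Complex.cos_neg, Complex.sin_neg, Complex.ofReal_sin]
    push_cast
    ring
  rw [h, h2, norm_mul, Complex.norm_exp_ofReal_mul_I, one_mul, norm_mul, Complex.norm_I, mul_one,
    Complex.norm_real, Real.norm_eq_abs, abs_mul]
  norm_num

lemma lemG (n m : ℕ) (hn : 2 ≤ n) (hm : m ≤ n) :
    ‖∑ j ∈ range m, Complex.exp (((2*π*j/n : ℝ):ℂ) * Complex.I)‖
      = Real.sin (π*m/n) / Real.sin (π/n) := by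
  have hn0 : (0:ℝ) < n := by positivity
  have hnne : (n:ℝ) ≠ 0 := ne_of_gt hn0
  have hsin : 0 < Real.sin (π/n) := by
    apply Real.sin_pos_of_pos_of_lt_pi
    · positivity
    · rw [div_lt_iff₀ hn0]
      nlinarith [Real.pi_pos, (show (2:ℝ) ≤ n by exact_mod_cast hn)]
  set z : ℂ := Complex.exp (((2*π/n : ℝ):ℂ) * Complex.I) with hzdef
  have habs1 : ‖z - 1‖ = 2 * Real.sin (π/n) := by
    rw [hzdef, abs_exp_I_sub_one]
    rw [show 2*π/n/2 = π/n by ring, abs_of_pos hsin]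
  have hz1 : z ≠ 1 := by
    intro h
    rw [h] at habs1
    simp at habs1
    linarith
  have hzj : ∀ j : ℕ, Complex.exp (((2*π*j/n : ℝ):ℂ) * Complex.I) = z ^ j := by
    intro j
    rw [hzdef, ← Complex.exp_nat_mul]
    congr 1
    push_cast
    ring
  have hzm : z ^ m = Complex.exp (((2*π*m/n : ℝ):ℂ) * Complex.I) := (hzj m).symm
  simp_rw [hzj]
  rw [geom_sum_eq hz1, norm_div, hzm, abs_exp_I_sub_one, abs_exp_I_sub_one]
  rw [show 2*π*m/n/2 = π*m/n by ring, show 2*π/n/2 = π/n by ring]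
  have hsm : 0 ≤ Real.sin (π*m/n) := by
    apply Real.sin_nonneg_of_nonneg_of_le_pi
    · positivity
    · rw [div_le_iff₀ hn0]
      have : (m:ℝ) ≤ n := by exact_mod_cast hm
      nlinarith [Real.pi_pos]
  rw [_root_.abs_of_nonneg hsm, _root_.abs_of_pos hsin]
  ring

lemma lemGreal (n m : ℕ) (hn : 2 ≤ n) (hm : m ≤ n) (β : ℝ) :
    ∑ j ∈ range m, Real.cos (β + 2*π*j/n) ≤ Real.sin (π*m/n) / Real.sin (π/n) := by
  have key : ∑ j ∈ range m, Real.cos (β + 2*π*j/n)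
      = (Complex.exp ((β:ℂ) * Complex.I)
          * ∑ j ∈ range m, Complex.exp (((2*π*j/n : ℝ):ℂ) * Complex.I)).re := by
    rw [Finset.mul_sum, Complex.re_sum]
    apply Finset.sum_congr rfl
    intro j _
    rw [← Complex.exp_add, show (β:ℂ) * Complex.I + ((2*π*j/n : ℝ):ℂ) * Complex.I
        = ((β + 2*π*j/n : ℝ):ℂ) * Complex.I by push_cast; ring, Complex.exp_ofReal_mul_I_re]
  rw [key, ← lemG n m hn hm]
  calc (Complex.exp ((β:ℂ) * Complex.I) * ∑ j ∈ range m,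
          Complex.exp (((2*π*j/n : ℝ):ℂ) * Complex.I)).re
      ≤ ‖Complex.exp ((β:ℂ) * Complex.I) * ∑ j ∈ range m,
          Complex.exp (((2*π*j/n : ℝ):ℂ) * Complex.I)‖ := Complex.re_le_norm _
    _ = ‖∑ j ∈ range m, Complex.exp (((2*π*j/n : ℝ):ℂ) * Complex.I)‖ := by
        rw [norm_mul, Complex.norm_exp_ofReal_mul_I, one_mul]

lemma shift_sum (n : ℕ) (P : ℤ → ℝ) (hP : ∀ x : ℤ, P (x + n) = P x) (q : ℤ) :
    ∑ a ∈ range n, P (a + q) = ∑ a ∈ range n, P a := by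
  have step : ∀ Q : ℤ → ℝ, (∀ x : ℤ, Q (x + n) = Q x) →
      ∑ a ∈ range n, Q (a + 1) = ∑ a ∈ range n, Q a := by
    intro Q hQ
    have h1 : ∑ a ∈ range (n+1), Q a = (∑ a ∈ range n, Q (a + 1)) + Q 0 := by
      rw [Finset.sum_range_succ' (fun a => Q a) n]
      push_cast
      rfl
    have h2 : ∑ a ∈ range (n+1), Q a = (∑ a ∈ range n, Q a) + Q n := by
      rw [Finset.sum_range_succ]
    have h3 : Q (n:ℤ) = Q 0 := by simpa using hQ 0
    rw [h3] at h2
    linarith [h1.symm.trans h2]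
  induction q using Int.induction_on with
  | zero => simp
  | succ i ih =>
      have := step (fun x => P (x + i)) (fun x => by
        simpa [add_right_comm] using hP (x + i))
      calc ∑ a ∈ range n, P (a + (i+1))
          = ∑ a ∈ range n, P ((a + 1) + i) := by
            apply Finset.sum_congr rfl; intro a _; ring_nf
        _ = ∑ a ∈ range n, P (a + i) := this
        _ = ∑ a ∈ range n, P a := ih
  | pred i ih =>
      have := step (fun x => P (x + (-i - 1))) (fun x => by
        simpa [add_right_comm, sub_eq_add_neg] using hP (x + (-i - 1)))
      calc ∑ a ∈ range n, P (a + (-i - 1))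
          = ∑ a ∈ range n, P ((a + 1) + (-i - 1)) := this.symm
        _ = ∑ a ∈ range n, P (a + (-i)) := by
            apply Finset.sum_congr rfl; intro a _; ring_nf
        _ = ∑ a ∈ range n, P a := ih

lemma sin_line (n k m : ℕ) (hn : 2 ≤ n) (hm : m ≤ k) (hk : 2*k ≤ n) :
    Real.sin (π*m/n) + ((k:ℝ) - m) * (Real.sin (π/n) * Real.cos (π*k/n))
      ≤ Real.sin (π*k/n) := by
  have hn0 : (0:ℝ) < n := by positivity
  have h2n : (2:ℝ) ≤ n := by exact_mod_cast hn
  have hkn : (k:ℝ) ≤ (n:ℝ)/2 := by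
    rw [le_div_iff₀ (by norm_num : (0:ℝ) < 2)]
    exact_mod_cast (by linarith [hk] : k*2 ≤ n)
  have hc0 : 0 ≤ Real.cos (π*k/n) := by
    apply Real.cos_nonneg_of_mem_Icc
    constructor
    · have : 0 ≤ π*k/n := by positivity
      linarith [Real.pi_pos]
    · rw [div_le_iff₀ hn0]
      nlinarith [Real.pi_pos]
  set f : ℕ → ℝ := fun j => Real.sin (π*j/n) with hf
  set d : ℝ := Real.sin (π/n) * Real.cos (π*k/n) with hd
  have key : ∀ j : ℕ, j < k → d ≤ f (j+1) - f j := by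
    intro j hj
    have hfj : f (j+1) - f j = Real.sin (π*(j+1)/n) - Real.sin (π*j/n) := by
      rw [hf]; push_cast; ring_nf
    rw [hfj, Real.sin_sub_sin]
    have e1 : (π*(j+1)/n - π*j/n)/2 = π/(2*n) := by field_simp; ring
    have e2 : (π*(j+1)/n + π*j/n)/2 = π*(2*j+1)/(2*n) := by field_simp; ring
    rw [e1, e2]
    have hs2 : 0 ≤ Real.sin (π/(2*n)) := by
      apply Real.sin_nonneg_of_nonneg_of_le_pi
      · positivity
      · rw [div_le_iff₀ (by positivity : (0:ℝ) < 2*n)]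
        nlinarith [Real.pi_pos]
    have hjk : (j:ℝ) + 1 ≤ k := by exact_mod_cast hj
    have hcc : Real.cos (π*k/n) ≤ Real.cos (π*(2*j+1)/(2*n)) := by
      apply Real.cos_le_cos_of_nonneg_of_le_pi
      · positivity
      · rw [div_le_iff₀ hn0]; nlinarith [Real.pi_pos]
      · rw [div_le_div_iff₀ (by positivity : (0:ℝ) < 2*n) hn0]
        nlinarith [Real.pi_pos, mul_pos Real.pi_pos hn0]
    have hsin_eq : Real.sin (π/n) = 2 * Real.sin (π/(2*n)) * Real.cos (π/(2*n)) := by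
      rw [← Real.sin_two_mul]
      congr 1
      field_simp
    have hcos1 : Real.cos (π/(2*n)) ≤ 1 := Real.cos_le_one _
    have h5 : d ≤ 2 * Real.sin (π/(2*n)) * Real.cos (π*k/n) := by
      rw [hd, hsin_eq]
      nlinarith [mul_nonneg hs2 hc0]
    calc d ≤ 2 * Real.sin (π/(2*n)) * Real.cos (π*k/n) := h5
      _ ≤ 2 * Real.sin (π/(2*n)) * Real.cos (π*(2*j+1)/(2*n)) := by nlinarith [hs2, hcc]
  have tel : f k - f m = ∑ j ∈ Ico m k, (f (j+1) - f j) := by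
    rw [Finset.sum_Ico_eq_sub _ hm, Finset.sum_range_sub f, Finset.sum_range_sub f]
    ring
  have bound : ((k:ℝ) - m) * d ≤ ∑ j ∈ Ico m k, (f (j+1) - f j) := by
    have hcard : (Ico m k).card = k - m := Nat.card_Ico m k
    have h6 := Finset.card_nsmul_le_sum (Ico m k) (fun j => f (j+1) - f j) d
      (fun x hx => key x (Finset.mem_Ico.mp hx).2)
    rw [hcard, nsmul_eq_mul] at h6
    have hcast : ((k - m : ℕ):ℝ) = (k:ℝ) - m := by
      push_cast [hm]; ring
    rw [hcast] at h6
    exact h6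
  have : f m + ((k:ℝ) - m) * d ≤ f k := by linarith [tel ▸ bound]
  exact this








set_option maxHeartbeats 1000000 in
lemma lemM (n : ℕ) (hn : 2 ≤ n) (A : Finset ℕ) (hA : A ⊆ range n)
    (hk : 2 * A.card ≤ n) (φ : ℝ) :
    ∑ a ∈ A, Real.cos (2*π*a/n + φ) ≤ Real.sin (π*A.card/n) / Real.sin (π/n) := by
  have hn0 : (0:ℝ) < n := by positivity
  have hnne : (n:ℝ) ≠ 0 := ne_of_gt hn0
  have h2n : (2:ℝ) ≤ n := by exact_mod_cast hn
  have hπ : (0:ℝ) < π := Real.pi_pos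
  have hsin : 0 < Real.sin (π/n) := by
    apply Real.sin_pos_of_pos_of_lt_pi
    · positivity
    · rw [div_lt_iff₀ hn0]; nlinarith
  rcases Nat.eq_zero_or_pos A.card with hk0 | hk1
  · have hA0 : A = ∅ := Finset.card_eq_zero.mp hk0
    subst hA0
    simp
  set k := A.card with hkdef
  have hkn : k ≤ n := by omega
  have hk1R : (1:ℝ) ≤ k := by exact_mod_cast hk1
  have h2kR : 2*(k:ℝ) ≤ n := by exact_mod_cast hk
  set y : ℝ := φ * n / (2*π) with hy
  set q : ℤ := ⌊y⌋ with hq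
  set s : ℝ := Int.fract y with hs
  have hs0 : 0 ≤ s := Int.fract_nonneg y
  have hs1 : s < 1 := Int.fract_lt_one y
  have hqs : (q:ℝ) + s = y := Int.floor_add_fract y
  have hφ : φ = 2*π*((q:ℝ) + s)/n := by
    rw [hqs, hy]; field_simp
  set c : ℝ := Real.cos (π*k/n) with hc
  have hkn2 : π*k/n ≤ π/2 := by
    rw [div_le_div_iff₀ hn0 (by norm_num : (0:ℝ) < 2)]
    nlinarith
  have hc0 : 0 ≤ c := by
    apply Real.cos_nonneg_of_mem_Icc
    constructor
    · have h8 : 0 ≤ π*k/n := div_nonneg (mul_nonneg hπ.le (Nat.cast_nonneg _)) hn0.le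
      linarith
    · exact hkn2
  have hπkn0 : 0 ≤ π*k/n := div_nonneg (mul_nonneg hπ.le (Nat.cast_nonneg _)) hn0.le
  have hπkn : π*k/n ≤ π := by linarith
  set P : ℤ → ℝ := fun b => max (Real.cos (2*π*((b:ℝ) + s)/n) - c) 0 with hP
  have hPper : ∀ x : ℤ, P (x + n) = P x := by
    intro x
    simp only [hP]
    have harg : 2*π*(((x + (n:ℤ) : ℤ):ℝ) + s)/n = 2*π*((x:ℝ) + s)/n + 2*π := by
      push_cast; field_simp; ring
    rw [harg, Real.cos_add_two_pi]
  have hPnonneg : ∀ b : ℤ, 0 ≤ P b := fun b => le_max_right _ _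
  -- step 1: pointwise majorization
  have step1 : ∑ a ∈ A, Real.cos (2*π*a/n + φ) ≤ (k:ℝ)*c + ∑ a ∈ A, P (a + q) := by
    have hpt : ∀ a ∈ A, Real.cos (2*π*a/n + φ) ≤ c + P ((a:ℤ) + q) := by
      intro a _
      have harg : 2*π*(a:ℝ)/n + φ = 2*π*((((a:ℤ) + q : ℤ):ℝ) + s)/n := by
        rw [hφ]; push_cast; field_simp; ring
      rw [harg]
      simp only [hP]
      have := le_max_left (Real.cos (2*π*((((a:ℤ) + q : ℤ):ℝ) + s)/n) - c) 0
      linarith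
    calc ∑ a ∈ A, Real.cos (2*π*a/n + φ) ≤ ∑ a ∈ A, (c + P ((a:ℤ) + q)) :=
          Finset.sum_le_sum hpt
      _ = (k:ℝ)*c + ∑ a ∈ A, P ((a:ℤ) + q) := by
          rw [Finset.sum_add_distrib, Finset.sum_const, nsmul_eq_mul, hkdef]
  have chain1 : ∑ a ∈ A, P ((a:ℤ) + q) ≤ ∑ a ∈ range n, P ((a:ℤ) + q) :=
    Finset.sum_le_sum_of_subset_of_nonneg hA (fun i _ _ => hPnonneg _)
  have chain2 : ∑ a ∈ range n, P ((a:ℤ) + q) = ∑ a ∈ range n, P (a:ℤ) :=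
    shift_sum n P hPper q
  -- the block
  set c2 : ℤ := ⌈(k:ℝ)/2 + s⌉ with hc2
  set c1 : ℤ := ⌈(k:ℝ)/2 - s⌉ with hc1
  have hc2pos : 0 < c2 := by
    rw [hc2, Int.ceil_pos]; nlinarith
  have hc1nonneg : 0 ≤ c1 := by
    have : (-1 : ℤ) < c1 := by
      rw [hc1, Int.lt_ceil]; push_cast; nlinarith
    omega
  set M₂ : ℕ := (c2 - 1).toNat with hM₂
  set M₁ : ℕ := c1.toNat with hM₁
  have hM₂R : (M₂:ℝ) = (c2:ℝ) - 1 := by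
    rw [hM₂]
    have : ((c2-1).toNat : ℤ) = c2 - 1 := Int.toNat_of_nonneg (by omega)
    exact_mod_cast congrArg (Int.cast : ℤ → ℝ) this
  have hM₁R : (M₁:ℝ) = (c1:ℝ) := by
    rw [hM₁]
    have : (c1.toNat : ℤ) = c1 := Int.toNat_of_nonneg hc1nonneg
    exact_mod_cast congrArg (Int.cast : ℤ → ℝ) this
  have hM2low : (k:ℝ)/2 + s - 1 ≤ (M₂:ℝ) := by
    rw [hM₂R]; have := Int.le_ceil ((k:ℝ)/2 + s); rw [← hc2] at this; linarith
  have hM2high : (M₂:ℝ) < (k:ℝ)/2 + s := by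
    rw [hM₂R]; have := Int.ceil_lt_add_one ((k:ℝ)/2 + s); rw [← hc2] at this; linarith
  have hM1low : (k:ℝ)/2 - s ≤ (M₁:ℝ) := by
    rw [hM₁R]; have := Int.le_ceil ((k:ℝ)/2 - s); rw [← hc1] at this; linarith
  have hM1high : (M₁:ℝ) < (k:ℝ)/2 - s + 1 := by
    rw [hM₁R]; have := Int.ceil_lt_add_one ((k:ℝ)/2 - s); rw [← hc1] at this; linarith
  set m := M₁ + M₂ with hm
  have hmR : (m:ℝ) = (M₁:ℝ) + M₂ := by push_cast [hm]; ring
  have hm_k : m ≤ k := by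
    have : (m:ℝ) < (k:ℝ) + 1 := by rw [hmR]; linarith
    have : m < k + 1 := by exact_mod_cast this
    omega
  have hm_n : m ≤ n := le_trans hm_k hkn
  have chain3 : ∑ a ∈ range n, P (a:ℤ) = ∑ a ∈ range n, P ((a:ℤ) - M₂) := by
    have := shift_sum n P hPper (-(M₂:ℤ))
    simp only [← sub_eq_add_neg] at this
    exact this.symm
  have hsplit : ∑ a ∈ range n, P ((a:ℤ) - M₂)
      = ∑ a ∈ range m, P ((a:ℤ) - M₂) + ∑ a ∈ Ico m n, P ((a:ℤ) - M₂) := by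
    rw [Finset.range_eq_Ico, ← Finset.sum_Ico_consecutive _ (Nat.zero_le m) hm_n,
      ← Finset.range_eq_Ico]
  have hzero : ∀ a ∈ Ico m n, P ((a:ℤ) - M₂) = 0 := by
    intro a ha
    obtain ⟨ham, han⟩ := Finset.mem_Ico.mp ha
    simp only [hP]
    apply max_eq_right
    apply sub_nonpos.mpr
    set u : ℝ := (((a:ℤ) - M₂ : ℤ):ℝ) + s with hu
    have huR : u = (a:ℝ) - M₂ + s := by rw [hu]; push_cast; ring
    have hamR : (m:ℝ) ≤ a := by exact_mod_cast ham
    have hanR : (a:ℝ) ≤ (n:ℝ) - 1 := by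
      have h14 : a + 1 ≤ n := han
      have h15 : (a:ℝ) + 1 ≤ n := by exact_mod_cast h14
      linarith
    have hulow : (k:ℝ)/2 ≤ u := by rw [huR]; rw [hmR] at hamR; linarith
    have huhigh : u ≤ (n:ℝ) - (k:ℝ)/2 := by rw [huR]; linarith
    set θ : ℝ := 2*π*u/n with hθ
    have hθlow : π*k/n ≤ θ := by
      rw [hθ, div_le_div_iff₀ hn0 hn0]
      calc π*(k:ℝ)*n = (2*π*(n:ℝ))*((k:ℝ)/2) := by ring
        _ ≤ (2*π*(n:ℝ))*u := mul_le_mul_of_nonneg_left hulow (by positivity)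
        _ = 2*π*u*n := by ring
    have hθhigh : θ ≤ 2*π - π*k/n := by
      rw [hθ]
      rw [div_le_iff₀ hn0]  -- 2πu ≤ (2π - πk/n)*n
      have : π*(k:ℝ)/n * n = π*k := by field_simp
      nlinarith
    show Real.cos θ ≤ c
    rw [hc]
    by_cases hθπ : θ ≤ π
    · exact Real.cos_le_cos_of_nonneg_of_le_pi hπkn0 hθπ hθlow
    · push_neg at hθπ
      rw [← Real.cos_two_pi_sub θ]
      exact Real.cos_le_cos_of_nonneg_of_le_pi hπkn0 (by linarith) (by linarith)
  have hpos : ∀ a ∈ range m, P ((a:ℤ) - M₂)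
      = Real.cos (2*π*((a:ℝ) - M₂ + s)/n) - c := by
    intro a ha
    have ham := Finset.mem_range.mp ha
    simp only [hP]
    have hcast : (((a:ℤ) - M₂ : ℤ):ℝ) = (a:ℝ) - M₂ := by push_cast; ring
    rw [hcast]
    apply max_eq_left
    apply sub_nonneg.mpr
    set u : ℝ := (a:ℝ) - M₂ + s with hu
    have hamR : (a:ℝ) ≤ (m:ℝ) - 1 := by
      have : a + 1 ≤ m := ham
      have : ((a+1:ℕ):ℝ) ≤ m := by exact_mod_cast this
      push_cast at this; linarith
    have hu1 : -((k:ℝ)/2) ≤ u := by rw [hu]; linarith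
    have hu2 : u ≤ (k:ℝ)/2 := by rw [hu]; rw [hmR] at hamR; linarith
    have habs : |2*π*u/n| ≤ π*k/n := by
      have h9 : 2*π*u/n = (2*π/n) * u := by ring
      rw [h9, abs_mul, abs_of_pos (by positivity : (0:ℝ) < 2*π/n)]
      have h10 : |u| ≤ (k:ℝ)/2 := abs_le.mpr ⟨hu1, hu2⟩
      calc 2*π/n * |u| ≤ 2*π/n * ((k:ℝ)/2) := by
            apply mul_le_mul_of_nonneg_left h10 (by positivity)
        _ = π*k/n := by ring
    rw [hc, ← Real.cos_abs (2*π*u/n)]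
    exact Real.cos_le_cos_of_nonneg_of_le_pi (abs_nonneg _) hπkn habs
  have hblock : ∑ a ∈ range m, P ((a:ℤ) - M₂)
      ≤ Real.sin (π*m/n)/Real.sin (π/n) - (m:ℝ)*c := by
    rw [Finset.sum_congr rfl hpos]
    set β : ℝ := 2*π*(s - (M₂:ℝ))/n with hβ
    have hterm : ∀ a ∈ range m, Real.cos (2*π*((a:ℝ) - M₂ + s)/n) - c
        = Real.cos (β + 2*π*a/n) - c := by
      intro a _
      congr 2
      rw [hβ]; field_simp; ring
    rw [Finset.sum_congr rfl hterm, Finset.sum_sub_distrib, Finset.sum_const,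
      Finset.card_range, nsmul_eq_mul]
    have := lemGreal n m hn hm_n β
    linarith
  -- final assembly
  have hfin : Real.sin (π*m/n)/Real.sin (π/n) + ((k:ℝ) - m)*c
      ≤ Real.sin (π*k/n)/Real.sin (π/n) := by
    have h11 := sin_line n k m hn hm_k hk
    have h12 : (Real.sin (π*m/n) + ((k:ℝ) - m)*(Real.sin (π/n)*c))/Real.sin (π/n)
        ≤ Real.sin (π*k/n)/Real.sin (π/n) := by
      gcongr
    have h13 : (Real.sin (π*m/n) + ((k:ℝ) - m)*(Real.sin (π/n)*c))/Real.sin (π/n)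
        = Real.sin (π*m/n)/Real.sin (π/n) + ((k:ℝ) - m)*c := by
      field_simp
    linarith [h13 ▸ h12]
  calc ∑ a ∈ A, Real.cos (2*π*a/n + φ)
      ≤ (k:ℝ)*c + ∑ a ∈ A, P ((a:ℤ) + q) := step1
    _ ≤ (k:ℝ)*c + ∑ a ∈ range n, P ((a:ℤ) + q) := by linarith [chain1]
    _ = (k:ℝ)*c + ∑ a ∈ range n, P ((a:ℤ) - M₂) := by rw [chain2, chain3]
    _ = (k:ℝ)*c + (∑ a ∈ range m, P ((a:ℤ) - M₂) + ∑ a ∈ Ico m n, P ((a:ℤ) - M₂)) := by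
        rw [hsplit]
    _ = (k:ℝ)*c + ∑ a ∈ range m, P ((a:ℤ) - M₂) := by
        rw [Finset.sum_eq_zero hzero]; ring
    _ ≤ (k:ℝ)*c + (Real.sin (π*m/n)/Real.sin (π/n) - (m:ℝ)*c) := by linarith [hblock]
    _ ≤ Real.sin (π*k/n)/Real.sin (π/n) := by linarith [hfin]

lemma sin_div_nonneg (n m : ℕ) (hn : 2 ≤ n) (hm : m ≤ n) :
    0 ≤ Real.sin (π*m/n) / Real.sin (π/n) := by
  have hn0 : (0:ℝ) < n := by positivity
  have h2n : (2:ℝ) ≤ n := by exact_mod_cast hn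
  have hmn : (m:ℝ) ≤ n := by exact_mod_cast hm
  apply div_nonneg
  · apply Real.sin_nonneg_of_nonneg_of_le_pi
    · positivity
    · rw [div_le_iff₀ hn0]; nlinarith [Real.pi_pos]
  · apply Real.sin_nonneg_of_nonneg_of_le_pi
    · positivity
    · rw [div_le_iff₀ hn0]; nlinarith [Real.pi_pos]

lemma main1 (n : ℕ) (hn : 2 ≤ n) (A : Finset ℕ) (hA : A ⊆ range n) (hk : 2 * A.card ≤ n) :
    ‖∑ a ∈ A, Complex.exp (((2*π*a/n : ℝ):ℂ) * Complex.I)‖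
      ≤ Real.sin (π*A.card/n) / Real.sin (π/n) := by
  set w : ℂ := ∑ a ∈ A, Complex.exp (((2*π*a/n : ℝ):ℂ) * Complex.I) with hw
  by_cases hw0 : w = 0
  · rw [hw0]
    simpa using sin_div_nonneg n A.card hn (by omega)
  set φ : ℝ := w.arg with hφ
  have key : (‖w‖ : ℝ) = ∑ a ∈ A, Real.cos (2*π*a/n + (-φ)) := by
    have h1 : Complex.exp (((-φ:ℝ):ℂ) * Complex.I) * w = (‖w‖ : ℂ) := by
      calc Complex.exp (((-φ:ℝ):ℂ) * Complex.I) * w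
          = Complex.exp (((-φ:ℝ):ℂ) * Complex.I)
            * ((‖w‖ :ℂ) * Complex.exp ((w.arg:ℂ) * Complex.I)) := by
            rw [Complex.norm_mul_exp_arg_mul_I w]
        _ = (‖w‖:ℂ) * (Complex.exp (((-φ:ℝ):ℂ) * Complex.I)
            * Complex.exp ((w.arg:ℂ) * Complex.I)) := by ring
        _ = (‖w‖:ℂ) := by
            rw [← Complex.exp_add, show ((-φ:ℝ):ℂ)*Complex.I + (w.arg:ℂ)*Complex.I = 0 by
              rw [hφ]; push_cast; ring, Complex.exp_zero, mul_one]
    have h2 : (‖w‖ : ℝ) = (Complex.exp (((-φ:ℝ):ℂ) * Complex.I) * w).re := by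
      rw [h1, Complex.ofReal_re]
    rw [h2, hw, Finset.mul_sum, Complex.re_sum]
    apply Finset.sum_congr rfl
    intro a _
    rw [← Complex.exp_add, show ((-φ:ℝ):ℂ) * Complex.I + ((2*π*a/n : ℝ):ℂ) * Complex.I
        = ((2*π*a/n + -φ : ℝ):ℂ) * Complex.I by push_cast; ring, Complex.exp_ofReal_mul_I_re]
  rw [key]
  exact lemM n hn A hA hk (-φ)

/-- Consecutive arcs maximize the modulus of a sum of a fixed number of `n`-th roots of unity:
for `S ⊆ μ_n` with `1 ≤ #S ≤ n-1`, `|∑_{z∈S} z| ≤ sin(π #S/n)/sin(π/n)`, with equality for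
consecutive sets of roots. -/
theorem roots_sum_abs_le (n : ℕ) (hn : 2 ≤ n)
    (S : Finset ℂ) (hS : S ⊆ (Polynomial.nthRoots n (1 : ℂ)).toFinset)
    (h1 : 1 ≤ S.card) (h2 : S.card ≤ n - 1) :
    ‖∑ z ∈ S, z‖ ≤ Real.sin (Real.pi * S.card / n) / Real.sin (Real.pi / n) ∧
    (∀ j₀ : ℤ, ∀ ℓ : ℕ, 1 ≤ ℓ → ℓ ≤ n - 1 →
      ‖∑ j ∈ Finset.range ℓ,
          Complex.exp (2 * Real.pi * Complex.I * ((j₀ : ℂ) + (j : ℂ)) / n)‖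
        = Real.sin (Real.pi * ℓ / n) / Real.sin (Real.pi / n)) := by
  have hn0 : n ≠ 0 := by omega
  have hnR : (0:ℝ) < n := by positivity
  have hnne : (n:ℝ) ≠ 0 := ne_of_gt hnR
  set e : ℕ → ℂ := fun a => Complex.exp (((2*π*a/n : ℝ):ℂ) * Complex.I) with he
  have hζ := Complex.isPrimitiveRoot_exp n hn0
  have hze : ∀ a : ℕ, Complex.exp (2*(π:ℂ)*Complex.I/n) ^ a = e a := by
    intro a
    rw [he, ← Complex.exp_nat_mul]
    congr 1
    push_cast
    field_simp
  have hroots : (Polynomial.nthRoots n (1:ℂ)).toFinset = (range n).image e := by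
    have hr := hζ.nthRoots_eq (one_pow n)
    ext z
    simp only [Multiset.mem_toFinset, hr, Multiset.mem_map, Multiset.mem_range,
      Finset.mem_image, Finset.mem_range, mul_one, hze]
  set A : Finset ℕ := (range n).filter (fun a => e a ∈ S) with hA
  have hAsub : A ⊆ range n := Finset.filter_subset _ _
  have hinj : ∀ x ∈ A, ∀ y ∈ A, e x = e y → x = y := by
    intro x hx y hy hxy
    apply hζ.pow_inj (Finset.mem_range.mp (hAsub hx)) (Finset.mem_range.mp (hAsub hy))
    rw [hze, hze, hxy]
  have hSA : S = A.image e := by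
    ext z
    constructor
    · intro hz
      have hz2 := hS hz
      rw [hroots] at hz2
      obtain ⟨a, ha, rfl⟩ := Finset.mem_image.mp hz2
      exact Finset.mem_image_of_mem e (Finset.mem_filter.mpr ⟨ha, hz⟩)
    · intro hz
      obtain ⟨a, ha, rfl⟩ := Finset.mem_image.mp hz
      exact (Finset.mem_filter.mp ha).2
  have hcard : A.card = S.card := by
    rw [hSA, Finset.card_image_of_injOn (fun x hx y hy h => hinj x hx y hy h)]
  have hsum : ∑ z ∈ S, z = ∑ a ∈ A, e a := by
    rw [hSA, Finset.sum_image hinj]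
  have hfull : ∑ a ∈ range n, e a = 0 := by
    have hG := lemG n n hn le_rfl
    rw [show π*(n:ℝ)/n = π by field_simp, Real.sin_pi, zero_div] at hG
    exact norm_eq_zero.mp hG
  constructor
  · -- inequality
    by_cases hcase : 2 * S.card ≤ n
    · rw [hsum, ← hcard]
      exact main1 n hn A hAsub (by rw [hcard]; exact hcase)
    · push_neg at hcase
      set B : Finset ℕ := range n \ A with hB
      have hBsub : B ⊆ range n := Finset.sdiff_subset
      have hBcard : B.card = n - A.card := by
        rw [hB, Finset.card_sdiff_of_subset hAsub, Finset.card_range]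
      have hBsum : ∑ a ∈ B, e a = - ∑ a ∈ A, e a := by
        rw [hB, Finset.sum_sdiff_eq_sub hAsub, hfull]
        ring
      have h2B : 2 * B.card ≤ n := by
        rw [hBcard, hcard]
        omega
      have habs : ‖∑ z ∈ S, z‖ = ‖∑ a ∈ B, e a‖ := by
        rw [hsum, hBsum, norm_neg]
      have hmain := main1 n hn B hBsub h2B
      rw [habs]
      have hrhs : Real.sin (π*B.card/n) = Real.sin (π*S.card/n) := by
        rw [hBcard, hcard]
        have hkn : S.card ≤ n := by omega
        have hc : ((n - S.card : ℕ):ℝ) = (n:ℝ) - S.card := by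
          push_cast [hkn]; ring
        rw [hc, show π*((n:ℝ) - S.card)/n = π - π*S.card/n by field_simp,
          Real.sin_pi_sub]
      rw [hrhs] at hmain
      exact hmain
  · -- equality for consecutive roots
    intro j₀ ℓ hℓ1 hℓ2
    have hterm : ∀ j : ℕ, Complex.exp (2 * (π:ℂ) * Complex.I * ((j₀ : ℂ) + (j : ℂ)) / n)
        = Complex.exp (((2*π*(j₀:ℝ)/n : ℝ):ℂ) * Complex.I)
          * Complex.exp (((2*π*j/n : ℝ):ℂ) * Complex.I) := by
      intro j
      rw [← Complex.exp_add]
      congr 1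
      push_cast
      field_simp
    calc ‖∑ j ∈ Finset.range ℓ,
            Complex.exp (2 * (π:ℂ) * Complex.I * ((j₀ : ℂ) + (j : ℂ)) / n)‖
        = ‖Complex.exp (((2*π*(j₀:ℝ)/n : ℝ):ℂ) * Complex.I)
            * ∑ j ∈ Finset.range ℓ, Complex.exp (((2*π*j/n : ℝ):ℂ) * Complex.I)‖ := by
          rw [Finset.mul_sum]
          congr 1
          exact Finset.sum_congr rfl (fun j _ => hterm j)
      _ = ‖∑ j ∈ Finset.range ℓ, Complex.exp (((2*π*j/n : ℝ):ℂ) * Complex.I)‖ := by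
          rw [norm_mul, Complex.norm_exp_ofReal_mul_I, one_mul]
      _ = Real.sin (π*ℓ/n) / Real.sin (π/n) := lemG n ℓ hn (by omega)
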